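/- Let H be a separable infinite-dimensional complex Hilbert space and let {f_n}_{n=0}^∞ be a sequence in H. If there exists a bounded linear operator B on H such that {B f_n} is a Parseval frame for H, then the image of the analysis operator of {f_n}, namely the set { {⟨f, f_n⟩}_{n=0}^∞ : f ∈ H and {⟨f, f_n⟩}_n ∈ ℓ²(ℕ) } ⊆ ℓ²(ℕ), contains an infinite-dimensional closed subspace of ℓ²(ℕ). -/

import Mathlib

open scoped ComplexInnerProductSpace

/-- If `{B f_n}` is a Parseval frame for some bounded operator `B` on `H`,
then the image of the analysis operator of `{f_n}` contains an infinite-dimensional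
closed subspace of `ℓ²(ℕ)`. -/
theorem stmt0 {H : Type*} [NormedAddCommGroup H] [InnerProductSpace ℂ H]
    [CompleteSpace H] [TopologicalSpace.SeparableSpace H]
    (hH : ¬ FiniteDimensional ℂ H) (fseq : ℕ → H) (B : H →L[ℂ] H)
    (hB : ∀ f : H, HasSum (fun n => ‖⟪f, B (fseq n)⟫‖ ^ 2) (‖f‖ ^ 2)) :
    ∃ S : Submodule ℂ (lp (fun _ : ℕ => ℂ) 2),
      IsClosed (S : Set (lp (fun _ : ℕ => ℂ) 2)) ∧ ¬ FiniteDimensional ℂ S ∧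
      ∀ c ∈ S, ∃ f : H, ∀ n : ℕ, (c : ∀ _ : ℕ, ℂ) n = ⟪f, fseq n⟫ := by
  classical
  have hmem : ∀ f : H, Memℓp (fun n => ⟪f, B (fseq n)⟫) 2 := by
    intro f
    apply memℓp_gen
    have h := (hB f).summable
    simp_rw [ENNReal.toReal_ofNat, show (2:ℝ) = ((2:ℕ):ℝ) by norm_num,
      Real.rpow_natCast]
    exact h
  set A : H →ₛₗ[starRingEnd ℂ] lp (fun _ : ℕ => ℂ) 2 :=
    { toFun := fun f => ⟨fun n => ⟪f, B (fseq n)⟫, hmem f⟩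
      map_add' := by
        intro x y
        apply lp.ext
        funext n
        simp [inner_add_left]
        rfl
      map_smul' := by
        intro c x
        apply lp.ext
        funext n
        simp [inner_smul_left]
        ring } with hA
  have hAcoe : ∀ (f : H) (n : ℕ), (A f : ∀ _ : ℕ, ℂ) n = ⟪f, B (fseq n)⟫ := by
    intro f n; rfl
  have hAnorm : ∀ f : H, ‖A f‖ = ‖f‖ := by
    intro f
    have h1 : ‖A f‖ ^ (2 : ℝ) = ∑' n, ‖(A f : ∀ _ : ℕ, ℂ) n‖ ^ (2 : ℝ) :=
      lp.norm_rpow_eq_tsum (by norm_num) _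
    have h2 : ∑' n, ‖(A f : ∀ _ : ℕ, ℂ) n‖ ^ (2 : ℝ) = ‖f‖ ^ (2 : ℕ) := by
      have h := (hB f).tsum_eq
      simp_rw [show (2:ℝ) = ((2:ℕ):ℝ) by norm_num, Real.rpow_natCast]
      exact h
    have h3 : ‖A f‖ ^ (2 : ℕ) = ‖f‖ ^ (2 : ℕ) := by
      have := h1.trans h2
      rw [show (2 : ℝ) = ((2 : ℕ) : ℝ) by norm_num, Real.rpow_natCast] at this
      exact this
    have := congrArg Real.sqrt h3
    rwa [Real.sqrt_sq (norm_nonneg _), Real.sqrt_sq (norm_nonneg _)] at this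
  have hIso : Isometry A := by
    apply Isometry.of_dist_eq
    intro x y
    rw [dist_eq_norm, dist_eq_norm, ← map_sub, hAnorm]
  refine ⟨LinearMap.range A, ?_, ?_, ?_⟩
  · rw [LinearMap.coe_range]
    exact hIso.isClosedEmbedding.isClosed_range
  · intro hS
    haveI : FiniteDimensional ℝ (LinearMap.range A) := Module.Finite.trans ℂ _
    -- ℝ-linear version of A, corestricted to the range
    let Aℝ : H →ₗ[ℝ] (LinearMap.range A) :=
      { toFun := fun f => ⟨A f, LinearMap.mem_range_self A f⟩
        map_add' := by intro x y; ext; simp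
        map_smul' := by
          intro c x
          ext
          have : A ((c : ℝ) • x) = (starRingEnd ℂ ((c : ℝ) : ℂ)) • A x := by
            rw [show ((c : ℝ) • x) = ((c : ℝ) : ℂ) • x by
              simp [Complex.coe_smul], A.map_smulₛₗ]
          simp only [this, Complex.conj_ofReal]
          simp [Complex.coe_smul]
          exact Complex.real_smul
      }
    have hinj : Function.Injective Aℝ := by
      intro x y hxy
      have h0 : A x = A y := congrArg Subtype.val hxy
      have := hAnorm (x - y)
      rw [map_sub, h0, sub_self, norm_zero] at this
      exact sub_eq_zero.mp (norm_eq_zero.mp this.symm)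
    haveI : FiniteDimensional ℝ H := FiniteDimensional.of_injective Aℝ hinj
    exact hH (Module.Finite.of_restrictScalars_finite ℝ ℂ H)
  · rintro c ⟨g, rfl⟩
    refine ⟨ContinuousLinearMap.adjoint B g, fun n => ?_⟩
    rw [hAcoe g n, ContinuousLinearMap.adjoint_inner_left]
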